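/- Suppose Σ̄ ∈ P(X) is an irreducible collection of partial splits of X that is closed under the M-rule θ_M (i.e. every application of θ_M to Σ̄ is trivial), and suppose Σ_r, Σ_{r+1} ∈ P(X) with Σ_r ⪯ Σ̄ and Σ_{r+1} obtained from Σ_r by a single application of θ_M. Then Σ_{r+1} ⪯ Σ̄. -/

import Mathlib

/-!
Common definitions: partial splits of a finite set `X`, modelled as unordered
pairs (`Sym2`) of nonempty disjoint subsets of `X`; the `M`-, `Y`- and `Z`-
closure rules; weak compatibility; `X`-cycles and display; split closure
sequences and split closures.
-/

variable {X : Type*}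

/-- `S` is a partial split of `X`: an unordered pair of nonempty disjoint subsets of `X`. -/
def IsPartialSplit (S : Sym2 (Set X)) : Prop :=
  ∃ A B : Set X, S = s(A, B) ∧ A.Nonempty ∧ B.Nonempty ∧ Disjoint A B

/-- `S` is a full split of `X`: a partial split whose two parts cover `X`. -/
def IsFullSplit (S : Sym2 (Set X)) : Prop :=
  ∃ A B : Set X, S = s(A, B) ∧ A.Nonempty ∧ B.Nonempty ∧ Disjoint A B ∧ A ∪ B = Set.univ

/-- The partial split `S` extends the partial split `T`. -/
def SplitExtends (S T : Sym2 (Set X)) : Prop :=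
  ∃ A B C D : Set X, S = s(A, B) ∧ T = s(C, D) ∧ C ⊆ A ∧ D ⊆ B

/-- `Sig ⪯ Sig'`: every partial split of `Sig` is extended by one of `Sig'`. -/
def Preceq (Sig Sig' : Set (Sym2 (Set X))) : Prop :=
  ∀ S ∈ Sig, ∃ T ∈ Sig', SplitExtends T S

/-- `Sig⁻`: the set obtained from `Sig` by removing all redundant partial splits,
i.e. those extended by a different element of `Sig`. -/
def sreduce (Sig : Set (Sym2 (Set X))) : Set (Sym2 (Set X)) :=
  {S | S ∈ Sig ∧ ¬ ∃ T ∈ Sig, T ≠ S ∧ SplitExtends T S}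

/-- `Sig ∈ P(X)`: `Sig` is an irreducible collection of partial splits of `X`. -/
def InPX (Sig : Set (Sym2 (Set X))) : Prop :=
  (∀ S ∈ Sig, IsPartialSplit S) ∧ sreduce Sig = Sig

/-- Two partial splits are compatible if some part of one is disjoint from some part
of the other. -/
def SplitCompatible (S T : Sym2 (Set X)) : Prop :=
  ∃ A B C D : Set X, S = s(A, B) ∧ T = s(C, D) ∧ A ∩ C = ∅

/-- Weak compatibility of a (multi)triple of partial splits: for every choice of parts,
one of the four distinguished triple intersections is empty. -/
def WeaklyCompatTriple (S1 S2 S3 : Sym2 (Set X)) : Prop :=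
  ∀ A1 B1 A2 B2 A3 B3 : Set X,
    S1 = s(A1, B1) → S2 = s(A2, B2) → S3 = s(A3, B3) →
    A1 ∩ A2 ∩ A3 = ∅ ∨ B1 ∩ B2 ∩ A3 = ∅ ∨ B1 ∩ A2 ∩ B3 = ∅ ∨ A1 ∩ B2 ∩ B3 = ∅

/-- A collection of partial splits is weakly compatible if every three of its members are. -/
def WeaklyCompatible (Sig : Set (Sym2 (Set X))) : Prop :=
  ∀ S1 ∈ Sig, ∀ S2 ∈ Sig, ∀ S3 ∈ Sig, WeaklyCompatTriple S1 S2 S3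

/-- Condition of the `M`-rule for the parts `A1|B1`, `A2|B2`. -/
def mCond (A1 B1 A2 B2 : Set X) : Prop :=
  (A1 ∩ A2).Nonempty ∧ (B1 ∩ B2).Nonempty

/-- Output of the `M`-rule applied with respect to the parts `A1|B1`, `A2|B2`. -/
def mOut (A1 B1 A2 B2 : Set X) : Set (Sym2 (Set X)) :=
  {s(A1, B1), s(A2, B2), s(A1 ∩ A2, B1 ∪ B2), s(B1 ∩ B2, A1 ∪ A2)}

/-- Condition of the `Y`-rule for the parts `A1|B1`, `A2|B2`, `A3|B3`. -/
def yCond (A1 B1 A2 B2 A3 B3 : Set X) : Prop :=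
  (A1 ∩ A2 ∩ A3).Nonempty ∧ (B1 ∩ B2 ∩ A3).Nonempty ∧
    (B1 ∩ A2 ∩ B3).Nonempty ∧ A1 ∩ B2 ∩ B3 = ∅

/-- Output of the `Y`-rule applied with respect to the parts `A1|B1`, `A2|B2`, `A3|B3`. -/
def yOut (A1 B1 A2 B2 A3 B3 : Set X) : Set (Sym2 (Set X)) :=
  {s(B1 ∪ (B2 ∩ B3), A1), s(A2 ∪ (A1 ∩ B3), B2), s(A3 ∪ (A1 ∩ B2), B3)}

/-- Condition of the `Z`-rule for the parts `A1|B1`, `A2|B2`. -/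
def zCond (A1 B1 A2 B2 : Set X) : Prop :=
  (A1 ∩ A2).Nonempty ∧ (A2 ∩ B1).Nonempty ∧ (B1 ∩ B2).Nonempty ∧ A1 ∩ B2 = ∅

/-- Output of the `Z`-rule applied with respect to the parts `A1|B1`, `A2|B2`. -/
def zOut (A1 B1 A2 B2 : Set X) : Set (Sym2 (Set X)) :=
  {s(B1 ∪ B2, A1), s(B2, A1 ∪ A2)}

/-- `Sig'` is obtained from `Sig` by a single application of the `Y`-rule. -/
def yStep (Sig Sig' : Set (Sym2 (Set X))) : Prop :=
  ∃ A1 B1 A2 B2 A3 B3 : Set X,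
    s(A1, B1) ∈ Sig ∧ s(A2, B2) ∈ Sig ∧ s(A3, B3) ∈ Sig ∧
    s(A1, B1) ≠ s(A2, B2) ∧ s(A1, B1) ≠ s(A3, B3) ∧ s(A2, B2) ≠ s(A3, B3) ∧
    yCond A1 B1 A2 B2 A3 B3 ∧
    Sig' = sreduce (Sig ∪ yOut A1 B1 A2 B2 A3 B3)

/-- `Sig'` is obtained from `Sig` by a single application of the `M`-rule. -/
def mStep (Sig Sig' : Set (Sym2 (Set X))) : Prop :=
  ∃ A1 B1 A2 B2 : Set X,
    s(A1, B1) ∈ Sig ∧ s(A2, B2) ∈ Sig ∧ s(A1, B1) ≠ s(A2, B2) ∧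
    mCond A1 B1 A2 B2 ∧
    Sig' = sreduce (Sig ∪ mOut A1 B1 A2 B2)

/-- `Sig'` is obtained from `Sig` by a single non-trivial application of the `Y`-rule. -/
def yStepNT (Sig Sig' : Set (Sym2 (Set X))) : Prop :=
  ∃ A1 B1 A2 B2 A3 B3 : Set X,
    s(A1, B1) ∈ Sig ∧ s(A2, B2) ∈ Sig ∧ s(A3, B3) ∈ Sig ∧
    s(A1, B1) ≠ s(A2, B2) ∧ s(A1, B1) ≠ s(A3, B3) ∧ s(A2, B2) ≠ s(A3, B3) ∧
    yCond A1 B1 A2 B2 A3 B3 ∧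
    ¬ Preceq (sreduce (yOut A1 B1 A2 B2 A3 B3)) Sig ∧
    Sig' = sreduce (Sig ∪ yOut A1 B1 A2 B2 A3 B3)

/-- `Sig'` is obtained from `Sig` by a single non-trivial application of the `M`-rule. -/
def mStepNT (Sig Sig' : Set (Sym2 (Set X))) : Prop :=
  ∃ A1 B1 A2 B2 : Set X,
    s(A1, B1) ∈ Sig ∧ s(A2, B2) ∈ Sig ∧ s(A1, B1) ≠ s(A2, B2) ∧
    mCond A1 B1 A2 B2 ∧
    ¬ Preceq (sreduce (mOut A1 B1 A2 B2)) Sig ∧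
    Sig' = sreduce (Sig ∪ mOut A1 B1 A2 B2)

/-- `Sig` is closed under the `Y`-rule: every application of the `Y`-rule to `Sig` is trivial. -/
def yClosed (Sig : Set (Sym2 (Set X))) : Prop :=
  ∀ A1 B1 A2 B2 A3 B3 : Set X,
    s(A1, B1) ∈ Sig → s(A2, B2) ∈ Sig → s(A3, B3) ∈ Sig →
    s(A1, B1) ≠ s(A2, B2) → s(A1, B1) ≠ s(A3, B3) → s(A2, B2) ≠ s(A3, B3) →
    yCond A1 B1 A2 B2 A3 B3 →
    Preceq (sreduce (yOut A1 B1 A2 B2 A3 B3)) Sig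

/-- `Sig` is closed under the `M`-rule: every application of the `M`-rule to `Sig` is trivial. -/
def mClosed (Sig : Set (Sym2 (Set X))) : Prop :=
  ∀ A1 B1 A2 B2 : Set X,
    s(A1, B1) ∈ Sig → s(A2, B2) ∈ Sig → s(A1, B1) ≠ s(A2, B2) →
    mCond A1 B1 A2 B2 →
    Preceq (sreduce (mOut A1 B1 A2 B2)) Sig

/-- A split closure sequence for `Sig` of length `n` with respect to the property `P` and
the non-trivial single-application relation `stepNT`: a strictly `⪯`-increasing sequence
in `P(X)` starting at `Sig` in which every term satisfying `P` is followed by the result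
of one non-trivial application of the rule. -/
def IsClosureSeq (P : Set (Sym2 (Set X)) → Prop)
    (stepNT : Set (Sym2 (Set X)) → Set (Sym2 (Set X)) → Prop)
    (Sig : Set (Sym2 (Set X))) (n : ℕ) (f : ℕ → Set (Sym2 (Set X))) : Prop :=
  f 0 = Sig ∧ (∀ i ≤ n, InPX (f i)) ∧
    (∀ i < n, P (f i) ∧ stepNT (f i) (f (i + 1)) ∧
      Preceq (f i) (f (i + 1)) ∧ f i ≠ f (i + 1))

/-- `cl` is a split closure of `Sig` (with `cl = none` playing the role of `ω`):
the last element of a split closure sequence for `Sig`, which either satisfies `P` and is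
closed under the rule, or fails `P`, in which case it is replaced by `ω`. -/
def IsSplitClosure (P : Set (Sym2 (Set X)) → Prop)
    (stepNT : Set (Sym2 (Set X)) → Set (Sym2 (Set X)) → Prop)
    (closed : Set (Sym2 (Set X)) → Prop)
    (Sig : Set (Sym2 (Set X))) (cl : Option (Set (Sym2 (Set X)))) : Prop :=
  ∃ (n : ℕ) (f : ℕ → Set (Sym2 (Set X))),
    IsClosureSeq P stepNT Sig n f ∧
    ((P (f n) ∧ closed (f n) ∧ cl = some (f n)) ∨ (¬ P (f n) ∧ cl = none))

/-- Split closure with respect to the `Y`-rule, `(P)` being weak compatibility. -/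
def IsYClosure (Sig : Set (Sym2 (Set X))) (cl : Option (Set (Sym2 (Set X)))) : Prop :=
  IsSplitClosure WeaklyCompatible yStepNT yClosed Sig cl

/-- Split closure with respect to the `M`-rule, `(P)` holding for all collections. -/
def IsMClosure (Sig : Set (Sym2 (Set X))) (cl : Option (Set (Sym2 (Set X)))) : Prop :=
  IsSplitClosure (fun _ => True) mStepNT mClosed Sig cl

/-- Split closure with respect to the combined `M/Y`-rule, `(P)` being weak compatibility. -/
def IsMYClosure (Sig : Set (Sym2 (Set X))) (cl : Option (Set (Sym2 (Set X)))) : Prop :=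
  IsSplitClosure WeaklyCompatible
    (fun s s' => mStepNT s s' ∨ yStepNT s s') (fun s => mClosed s ∧ yClosed s) Sig cl

/-- `C` is an `X`-cycle: a connected graph on the vertex set `X` (`|X| ≥ 3`) in which
every vertex has degree `2`. -/
def IsXCycle (C : SimpleGraph X) : Prop :=
  C.Connected ∧ 3 ≤ Nat.card X ∧ ∀ v : X, (C.neighborSet v).ncard = 2

/-- The partial split `S` is displayed by the `X`-cycle `C`: there are two distinct
edges of `C` whose deletion leaves one component containing one part of `S` and
another component containing the other part. -/
def DisplaysSplit (C : SimpleGraph X) (S : Sym2 (Set X)) : Prop :=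
  ∃ A B : Set X, S = s(A, B) ∧
    ∃ e1 e2 : Sym2 X, e1 ∈ C.edgeSet ∧ e2 ∈ C.edgeSet ∧ e1 ≠ e2 ∧
      ∃ c1 c2 : (C.deleteEdges {e1, e2}).ConnectedComponent,
        c1 ≠ c2 ∧ A ⊆ c1.supp ∧ B ⊆ c2.supp

/-- A collection of partial splits is displayed by `C` if each of its members is. -/
def DisplaysColl (C : SimpleGraph X) (Sig : Set (Sym2 (Set X))) : Prop :=
  ∀ S ∈ Sig, DisplaysSplit C S

/-- `cl ≠ ω` and the underlying collection is displayed by `C`. -/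
def OptionDisplays (C : SimpleGraph X) (cl : Option (Set (Sym2 (Set X)))) : Prop :=
  ∃ Sig, cl = some Sig ∧ DisplaysColl C Sig

/-- The ground set `A ∪ B` of a partial split `A|B`. -/
def splitGround (S : Sym2 (Set X)) : Set X :=
  ⋃₀ {A : Set X | A ∈ S}

/-- Membership in `P_ω(X) = P(X) ∪ {ω}`. -/
def InPOmega (x : Option (Set (Sym2 (Set X)))) : Prop :=
  x = none ∨ ∃ Sig, x = some Sig ∧ InPX Sig

/-- The order `⪯` on `P_ω(X)`, with `Sig ⪯ ω` for all `Sig` and `ω ⪯ ω`. -/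
def PreceqO (x y : Option (Set (Sym2 (Set X)))) : Prop :=
  y = none ∨ ∃ Sig Sig', x = some Sig ∧ y = some Sig' ∧ Preceq Sig Sig'

/-- Split closure as a relation on `P_ω(X)`, with `⟨ω⟩ = ω`. -/
def ClosO (cls : Set (Sym2 (Set X)) → Option (Set (Sym2 (Set X))) → Prop)
    (x y : Option (Set (Sym2 (Set X)))) : Prop :=
  (x = none ∧ y = none) ∨ ∃ Sig, x = some Sig ∧ cls Sig y

lemma splitExtends_refl (S : Sym2 (Set X)) : SplitExtends S S := by
  obtain ⟨⟨A, B⟩, rfl⟩ := Quot.exists_rep S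
  exact ⟨A, B, A, B, rfl, rfl, le_refl _, le_refl _⟩

lemma splitExtends_pair {T : Sym2 (Set X)} {A B : Set X}
    (h : SplitExtends T s(A, B)) : ∃ P Q : Set X, T = s(P, Q) ∧ A ⊆ P ∧ B ⊆ Q := by
  obtain ⟨P, Q, C, D, hT, hCD, hC, hD⟩ := h
  rw [Sym2.eq_iff] at hCD
  rcases hCD with ⟨rfl, rfl⟩ | ⟨rfl, rfl⟩
  · exact ⟨P, Q, hT, hC, hD⟩
  · exact ⟨Q, P, by rw [hT, Sym2.eq_swap], hD, hC⟩

lemma splitExtends_trans {S T U : Sym2 (Set X)}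
    (h1 : SplitExtends S T) (h2 : SplitExtends T U) : SplitExtends S U := by
  obtain ⟨C, D, E, F, hT, hU, hE, hF⟩ := h2
  subst hT
  obtain ⟨P, Q, hS, hC, hD⟩ := splitExtends_pair h1
  exact ⟨P, Q, E, F, hS, hU, hE.trans hC, hF.trans hD⟩

lemma splitExtends_antisymm {S T : Sym2 (Set X)}
    (h1 : SplitExtends S T) (h2 : SplitExtends T S) : S = T := by
  obtain ⟨C, D, E, F, hT, hS, hE, hF⟩ := h2
  subst hT hS
  obtain ⟨P, Q, hS, hC, hD⟩ := splitExtends_pair h1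
  rw [Sym2.eq_iff] at hS
  rcases hS with ⟨rfl, rfl⟩ | ⟨rfl, rfl⟩
  · rw [subset_antisymm hC hE, subset_antisymm hD hF]
  · rw [subset_antisymm hC (hF.trans (hD.trans hE)),
      subset_antisymm hD (hE.trans (hC.trans hF))]
    exact Sym2.eq_swap

lemma exists_irredundant_aux : ∀ (n : ℕ) (Sig : Set (Sym2 (Set X))), Sig.Finite →
    Sig.ncard ≤ n → ∀ S ∈ Sig, ∃ T ∈ sreduce Sig, SplitExtends T S := by
  intro n
  induction n with
  | zero =>
    intro Sig hfin hcard S hS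
    have : Sig = ∅ := (Set.ncard_eq_zero hfin).mp (Nat.le_zero.mp hcard)
    simp [this] at hS
  | succ n ih =>
    intro Sig hfin hcard S hS
    by_cases hred : S ∈ sreduce Sig
    · exact ⟨S, hred, splitExtends_refl S⟩
    · have : ∃ V ∈ Sig, V ≠ S ∧ SplitExtends V S := by
        by_contra h
        exact hred ⟨hS, h⟩
      obtain ⟨V, hV, hVne, hVext⟩ := this
      have hlt : (Sig \ {S}).ncard < Sig.ncard :=
        Set.ncard_diff_singleton_lt_of_mem hS hfin
      obtain ⟨T, hTred, hText⟩ := ih (Sig \ {S}) hfin.diff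
        (by omega) V ⟨hV, hVne⟩
      refine ⟨T, ⟨hTred.1.1, ?_⟩, splitExtends_trans hText hVext⟩
      rintro ⟨U, hU, hUne, hUext⟩
      by_cases hUS : U = S
      · subst hUS
        have hVT : V = T := by
          by_contra hVT
          exact hTred.2 ⟨V, ⟨hV, hVne⟩, hVT, splitExtends_trans hVext hUext⟩
        have : U = T := splitExtends_antisymm hUext (hVT ▸ hVext)
        exact hUne this
      · exact hTred.2 ⟨U, ⟨hU, hUS⟩, hUne, hUext⟩

lemma exists_irredundant {Sig : Set (Sym2 (Set X))} (hfin : Sig.Finite)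
    {S : Sym2 (Set X)} (hS : S ∈ Sig) : ∃ T ∈ sreduce Sig, SplitExtends T S :=
  exists_irredundant_aux Sig.ncard Sig hfin le_rfl S hS

lemma mem_sigBar_disjoint {SigBar : Set (Sym2 (Set X))} (hPX : InPX SigBar)
    {A B : Set X} (h : s(A, B) ∈ SigBar) : Disjoint A B := by
  obtain ⟨C, D, hCD, _, _, hdisj⟩ := hPX.1 _ h
  rw [Sym2.eq_iff] at hCD
  rcases hCD with ⟨rfl, rfl⟩ | ⟨rfl, rfl⟩
  · exact hdisj
  · exact hdisj.symm

/-- if `Σ̄ ∈ P(X)` is closed under the `M`-rule, `Σ_r ∈ P(X)` with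
`Σ_r ⪯ Σ̄`, and `Σ_{r+1}` is obtained from `Σ_r` by one application of the `M`-rule,
then `Σ_{r+1} ⪯ Σ̄`. -/
theorem statement10 {X : Type*} [Fintype X] (SigBar SigR SigR1 : Set (Sym2 (Set X)))
    (hBarPX : InPX SigBar) (hBarCl : mClosed SigBar)
    (hRPX : InPX SigR) (hR1PX : InPX SigR1)
    (hpre : Preceq SigR SigBar)
    (hstep : mStep SigR SigR1) :
    Preceq SigR1 SigBar := by
  obtain ⟨A1, B1, A2, B2, h1, h2, hne, ⟨hcA, hcB⟩, hEq⟩ := hstep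
  -- extensions of the two input splits inside SigBar
  obtain ⟨T1, hT1, hT1e⟩ := hpre _ h1
  obtain ⟨T2, hT2, hT2e⟩ := hpre _ h2
  obtain ⟨A1', B1', rfl, hA1, hB1⟩ := splitExtends_pair hT1e
  obtain ⟨A2', B2', rfl, hA2, hB2⟩ := splitExtends_pair hT2e
  have key : ∀ S ∈ mOut A1 B1 A2 B2, ∃ T ∈ SigBar, SplitExtends T S := by
    intro S hS
    have hSext : SplitExtends s(A1' ∩ A2', B1' ∪ B2') s(A1 ∩ A2, B1 ∪ B2) :=
      ⟨_, _, _, _, rfl, rfl, Set.inter_subset_inter hA1 hA2, Set.union_subset_union hB1 hB2⟩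
    have hSext' : SplitExtends s(B1' ∩ B2', A1' ∪ A2') s(B1 ∩ B2, A1 ∪ A2) :=
      ⟨_, _, _, _, rfl, rfl, Set.inter_subset_inter hB1 hB2, Set.union_subset_union hA1 hA2⟩
    rcases hS with hS | hS | hS | hS
    · exact hS ▸ ⟨_, hT1, hT1e⟩
    · exact hS ▸ ⟨_, hT2, hT2e⟩
    all_goals {
      subst hS
      by_cases hTne : s(A1', B1') = s(A2', B2')
      · -- the two extending splits coincide
        rw [Sym2.eq_iff] at hTne
        rcases hTne with ⟨rfl, rfl⟩ | ⟨rfl, rfl⟩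
        · first
          | exact ⟨s(A1', B1'), hT1,
              ⟨A1', B1', _, _, rfl, rfl, (Set.inter_subset_left.trans hA1),
                Set.union_subset hB1 hB2⟩⟩
          | exact ⟨s(A1', B1'), hT1,
              ⟨B1', A1', _, _, Sym2.eq_swap.symm, rfl,
                (Set.inter_subset_left.trans hB1), Set.union_subset hA1 hA2⟩⟩
        · exfalso
          have hdisj : Disjoint A1' B1' := mem_sigBar_disjoint hBarPX hT1
          first
          | exact (hdisj.mono hA1 hA2).eq_bot ▸
              (by simpa [Set.not_nonempty_iff_eq_empty,
                    Set.disjoint_iff_inter_eq_empty.mp (hdisj.mono hA1 hA2)] using hcA)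
          | exact (by simpa [Set.not_nonempty_iff_eq_empty,
                    Set.disjoint_iff_inter_eq_empty.mp (hdisj.symm.mono hB1 hB2)] using hcB)
      · -- the two extending splits are distinct: use mClosed
        have hm : mCond A1' B1' A2' B2' :=
          ⟨hcA.mono (Set.inter_subset_inter hA1 hA2),
           hcB.mono (Set.inter_subset_inter hB1 hB2)⟩
        have hP := hBarCl A1' B1' A2' B2' hT1 hT2 hTne hm
        have hfin : (mOut A1' B1' A2' B2').Finite := by
          unfold mOut
          exact (Set.finite_singleton _).insert _ |>.insert _ |>.insert _
        first
        | · obtain ⟨T, hTred, hText⟩ := exists_irredundant hfin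
              (show s(A1' ∩ A2', B1' ∪ B2') ∈ mOut A1' B1' A2' B2' by
                unfold mOut; simp)
            obtain ⟨T', hT', hT'e⟩ := hP T hTred
            exact ⟨T', hT', splitExtends_trans hT'e (splitExtends_trans hText hSext)⟩
        | · obtain ⟨T, hTred, hText⟩ := exists_irredundant hfin
              (show s(B1' ∩ B2', A1' ∪ A2') ∈ mOut A1' B1' A2' B2' by
                unfold mOut; simp)
            obtain ⟨T', hT', hT'e⟩ := hP T hTred
            exact ⟨T', hT', splitExtends_trans hT'e (splitExtends_trans hText hSext')⟩
    }
  intro S hS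
  rw [hEq] at hS
  rcases hS.1 with hS' | hS'
  · exact hpre S hS'
  · exact key S hS'
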